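/- Let M and N be representations of the A_3(bf) quiver, each given as a direct sum of interval representations, and let Θ: M → N be a morphism. If π_M: M → I[1,3]^{m} and π_N: N → I[1,3]^{m'} are the canonical projections onto the I[1,3]-isotypic summands and ι_M, ι_N the canonical inclusions, then for a composition Ψ∘Θ of two such morphisms, the restricted block satisfies π_P ∘ (Ψ∘Θ) ∘ ι_M = (π_P ∘ Ψ ∘ ι_N) ∘ (π_N ∘ Θ ∘ ι_M). (Functoriality of the restriction to the I[1,3] diagonal block.) -/
import Mathlib


/-- The ambient space of the direct sum `⊕_{(a,b)} I[a,b]^{m (a,b)}` of interval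
representations: one copy of `K^{m p}` for each pair `p = (a,b)`. -/
abbrev IntSum (K : Type) [Field K] (m : ℕ × ℕ → ℕ) := ∀ p : ℕ × ℕ, Fin (m p) → K

/-- Projection of the ambient space onto the part supported at vertex `v`: it keeps the
component of `I[a,b]` exactly when `[a,b]` is a valid interval of the `A_n` quiver
(`1 ≤ a ≤ b ≤ n`) containing `v`.  The vertex-`v` space of the direct-sum representation
is the image of `trunc`, and for an arrow between vertices `i` and `i+1` the structure
map of the representation is (the restriction of) `trunc (i+1) ∘ trunc i`, keeping exactly
the intervals containing both endpoints. -/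
def trunc (K : Type) [Field K] (n : ℕ) (m : ℕ × ℕ → ℕ) (v : ℕ) :
    IntSum K m →ₗ[K] IntSum K m :=
  LinearMap.pi fun p =>
    if 1 ≤ p.1 ∧ p.1 ≤ v ∧ v ≤ p.2 ∧ p.2 ≤ n then LinearMap.proj p else 0

/-- A morphism of representations of the `A_n` quiver with orientation `τ`
(`τ i = true` meaning the `i`-th arrow points forward `i → i+1`) between the direct sums
of interval representations with multiplicities `m` and `m'`: a family of linear maps
`θ v` (one for each vertex), supported on the vertex spaces, commuting with the structure
maps of the two representations. -/
structure RepMor (K : Type) [Field K] (n : ℕ) (τ : ℕ → Bool) (m m' : ℕ × ℕ → ℕ) where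
  θ : ℕ → IntSum K m →ₗ[K] IntSum K m'
  supp : ∀ v, trunc K n m' v ∘ₗ θ v ∘ₗ trunc K n m v = θ v
  commF : ∀ i, 1 ≤ i → i < n → τ i = true →
    θ (i + 1) ∘ₗ trunc K n m (i + 1) ∘ₗ trunc K n m i =
      trunc K n m' (i + 1) ∘ₗ θ i ∘ₗ trunc K n m i
  commB : ∀ i, 1 ≤ i → i < n → τ i = false →
    θ i ∘ₗ trunc K n m i ∘ₗ trunc K n m (i + 1) =
      trunc K n m' i ∘ₗ θ (i + 1) ∘ₗ trunc K n m (i + 1)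

/-- The diagonal block of a morphism at the interval `I[p.1, p.2]` and vertex `v`:
the composition (projection onto the `I[a,b]`-isotypic summand) ∘ (the morphism) ∘
(inclusion of the `I[a,b]`-isotypic summand). -/
def blk {K : Type} [Field K] {n : ℕ} {τ : ℕ → Bool} {m m' : ℕ × ℕ → ℕ}
    (Θ : RepMor K n τ m m') (p : ℕ × ℕ) (v : ℕ) :
    (Fin (m p) → K) →ₗ[K] (Fin (m' p) → K) :=
  LinearMap.proj p ∘ₗ Θ.θ v ∘ₗ LinearMap.single K (fun p => Fin (m p) → K) p

/-- The orientation `bf` of the `A₃` quiver: arrow 1 backward (`2 → 1`), arrow 2 forward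
(`2 → 3`). -/
def tauBF : ℕ → Bool := fun i => i == 2


section Helpers

variable {K : Type} [Field K] {m m' : ℕ × ℕ → ℕ}

lemma trunc_apply (n v : ℕ) (x : IntSum K m) (p : ℕ × ℕ) :
    trunc K n m v x p = if 1 ≤ p.1 ∧ p.1 ≤ v ∧ v ≤ p.2 ∧ p.2 ≤ n then x p else 0 := by
  simp only [trunc, LinearMap.pi_apply]
  split <;> simp

lemma trunc_single (n v : ℕ) (q : ℕ × ℕ) (w : Fin (m q) → K) :
    trunc K n m v (Pi.single q w) =
      if 1 ≤ q.1 ∧ q.1 ≤ v ∧ v ≤ q.2 ∧ q.2 ≤ n then Pi.single q w else 0 := by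
  funext p
  rw [trunc_apply]
  by_cases h : p = q
  · subst h; split <;> simp
  · rw [Pi.single_eq_of_ne h]; split <;> split <;> simp [Pi.single_eq_of_ne h]

lemma supp_zero (Θ : RepMor K 3 tauBF m m') (v : ℕ) (z : IntSum K m) (q : ℕ × ℕ)
    (h : ¬(1 ≤ q.1 ∧ q.1 ≤ v ∧ v ≤ q.2 ∧ q.2 ≤ 3)) : (Θ.θ v z) q = 0 := by
  conv_lhs => rw [← Θ.supp v]
  simp only [LinearMap.comp_apply]
  rw [trunc_apply, if_neg h]

lemma theta11 (Θ : RepMor K 3 tauBF m m') (x : Fin (m (1,3)) → K) :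
    (Θ.θ 1 (Pi.single (1,3) x)) (1,1) = 0 := by
  have h := Θ.commB 1 le_rfl (by norm_num) (by decide)
  have h2 := congrFun (DFunLike.congr_fun h (Pi.single ((1:ℕ),(3:ℕ)) x)) ((1:ℕ),(1:ℕ))
  norm_num [LinearMap.comp_apply, trunc_single, trunc_apply] at h2
  rw [h2, supp_zero]
  norm_num

lemma theta33 (Θ : RepMor K 3 tauBF m m') (x : Fin (m (1,3)) → K) :
    (Θ.θ 3 (Pi.single (1,3) x)) (3,3) = 0 := by
  have h := Θ.commF 2 (by norm_num) (by norm_num) (by decide)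
  have h2 := congrFun (DFunLike.congr_fun h (Pi.single ((1:ℕ),(3:ℕ)) x)) ((3:ℕ),(3:ℕ))
  norm_num [LinearMap.comp_apply, trunc_single, trunc_apply] at h2
  rw [h2, supp_zero]
  norm_num

lemma psi12_2 (Ψ : RepMor K 3 tauBF m m') (w : Fin (m (1,2)) → K) :
    (Ψ.θ 2 (Pi.single (1,2) w)) (1,3) = 0 := by
  have h := Ψ.commF 2 (by norm_num) (by norm_num) (by decide)
  have h2 := congrFun (DFunLike.congr_fun h (Pi.single ((1:ℕ),(2:ℕ)) w)) ((1:ℕ),(3:ℕ))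
  norm_num [LinearMap.comp_apply, trunc_single, trunc_apply] at h2
  exact h2.symm

lemma psi22_2 (Ψ : RepMor K 3 tauBF m m') (w : Fin (m (2,2)) → K) :
    (Ψ.θ 2 (Pi.single (2,2) w)) (1,3) = 0 := by
  have h := Ψ.commB 1 le_rfl (by norm_num) (by decide)
  have h2 := congrFun (DFunLike.congr_fun h (Pi.single ((2:ℕ),(2:ℕ)) w)) ((1:ℕ),(3:ℕ))
  norm_num [LinearMap.comp_apply, trunc_single, trunc_apply] at h2
  exact h2.symm

lemma psi23_2 (Ψ : RepMor K 3 tauBF m m') (w : Fin (m (2,3)) → K) :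
    (Ψ.θ 2 (Pi.single (2,3) w)) (1,3) = 0 := by
  have h := Ψ.commB 1 le_rfl (by norm_num) (by decide)
  have h2 := congrFun (DFunLike.congr_fun h (Pi.single ((2:ℕ),(3:ℕ)) w)) ((1:ℕ),(3:ℕ))
  norm_num [LinearMap.comp_apply, trunc_single, trunc_apply] at h2
  exact h2.symm

lemma psi12_1 (Ψ : RepMor K 3 tauBF m m') (w : Fin (m (1,2)) → K) :
    (Ψ.θ 1 (Pi.single (1,2) w)) (1,3) = 0 := by
  have h := Ψ.commB 1 le_rfl (by norm_num) (by decide)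
  have h2 := congrFun (DFunLike.congr_fun h (Pi.single ((1:ℕ),(2:ℕ)) w)) ((1:ℕ),(3:ℕ))
  norm_num [LinearMap.comp_apply, trunc_single, trunc_apply] at h2
  rw [h2, psi12_2]

lemma psi23_3 (Ψ : RepMor K 3 tauBF m m') (w : Fin (m (2,3)) → K) :
    (Ψ.θ 3 (Pi.single (2,3) w)) (1,3) = 0 := by
  have h := Ψ.commF 2 (by norm_num) (by norm_num) (by decide)
  have h2 := congrFun (DFunLike.congr_fun h (Pi.single ((2:ℕ),(3:ℕ)) w)) ((1:ℕ),(3:ℕ))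
  norm_num [LinearMap.comp_apply, trunc_single, trunc_apply] at h2
  rw [h2, psi23_2]

lemma trunc1_decomp (y : IntSum K m) :
    trunc K 3 m 1 y
      = Pi.single ((1:ℕ),(1:ℕ)) (y (1,1)) +
        (Pi.single ((1:ℕ),(2:ℕ)) (y (1,2)) + Pi.single ((1:ℕ),(3:ℕ)) (y (1,3))) := by
  funext p
  obtain ⟨a,b⟩ := p
  rw [trunc_apply]
  simp only [Pi.add_apply]
  by_cases h1 : (a,b) = ((1:ℕ),(1:ℕ))
  · injection h1 with ha hb; subst ha; subst hb
    rw [Pi.single_eq_same, Pi.single_eq_of_ne (by decide), Pi.single_eq_of_ne (by decide),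
      if_pos (by norm_num)]
    simp
  · by_cases h2 : (a,b) = ((1:ℕ),(2:ℕ))
    · injection h2 with ha hb; subst ha; subst hb
      rw [Pi.single_eq_same, Pi.single_eq_of_ne (by decide), Pi.single_eq_of_ne (by decide),
        if_pos (by norm_num)]
      simp
    · by_cases h3 : (a,b) = ((1:ℕ),(3:ℕ))
      · injection h3 with ha hb; subst ha; subst hb
        rw [Pi.single_eq_same, Pi.single_eq_of_ne (by decide), Pi.single_eq_of_ne (by decide),
          if_pos (by norm_num)]
        simp
      · rw [Pi.single_eq_of_ne h1, Pi.single_eq_of_ne h2, Pi.single_eq_of_ne h3, if_neg]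
        · simp
        · rintro ⟨ha1, ha2, hb1, hb2⟩
          have : a = 1 := le_antisymm ha2 ha1
          subst this
          interval_cases b <;> simp_all

lemma trunc2_decomp (y : IntSum K m) :
    trunc K 3 m 2 y
      = Pi.single ((1:ℕ),(2:ℕ)) (y (1,2)) +
        (Pi.single ((2:ℕ),(2:ℕ)) (y (2,2)) +
          (Pi.single ((2:ℕ),(3:ℕ)) (y (2,3)) + Pi.single ((1:ℕ),(3:ℕ)) (y (1,3)))) := by
  funext p
  obtain ⟨a,b⟩ := p
  rw [trunc_apply]
  simp only [Pi.add_apply]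
  by_cases h1 : (a,b) = ((1:ℕ),(2:ℕ))
  · injection h1 with ha hb; subst ha; subst hb
    rw [Pi.single_eq_same, Pi.single_eq_of_ne (by decide), Pi.single_eq_of_ne (by decide),
      Pi.single_eq_of_ne (by decide), if_pos (by norm_num)]
    simp
  · by_cases h2 : (a,b) = ((2:ℕ),(2:ℕ))
    · injection h2 with ha hb; subst ha; subst hb
      rw [Pi.single_eq_same, Pi.single_eq_of_ne (by decide), Pi.single_eq_of_ne (by decide),
        Pi.single_eq_of_ne (by decide), if_pos (by norm_num)]
      simp
    · by_cases h3 : (a,b) = ((2:ℕ),(3:ℕ))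
      · injection h3 with ha hb; subst ha; subst hb
        rw [Pi.single_eq_same, Pi.single_eq_of_ne (by decide), Pi.single_eq_of_ne (by decide),
          Pi.single_eq_of_ne (by decide), if_pos (by norm_num)]
        simp
      · by_cases h4 : (a,b) = ((1:ℕ),(3:ℕ))
        · injection h4 with ha hb; subst ha; subst hb
          rw [Pi.single_eq_same, Pi.single_eq_of_ne (by decide), Pi.single_eq_of_ne (by decide),
            Pi.single_eq_of_ne (by decide), if_pos (by norm_num)]
          simp
        · rw [Pi.single_eq_of_ne h1, Pi.single_eq_of_ne h2, Pi.single_eq_of_ne h3,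
            Pi.single_eq_of_ne h4, if_neg]
          · simp
          · rintro ⟨ha1, ha2, hb1, hb2⟩
            interval_cases a <;> interval_cases b <;> simp_all

lemma trunc3_decomp (y : IntSum K m) :
    trunc K 3 m 3 y
      = Pi.single ((3:ℕ),(3:ℕ)) (y (3,3)) +
        (Pi.single ((2:ℕ),(3:ℕ)) (y (2,3)) + Pi.single ((1:ℕ),(3:ℕ)) (y (1,3))) := by
  funext p
  obtain ⟨a,b⟩ := p
  rw [trunc_apply]
  simp only [Pi.add_apply]
  by_cases h1 : (a,b) = ((3:ℕ),(3:ℕ))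
  · injection h1 with ha hb; subst ha; subst hb
    rw [Pi.single_eq_same, Pi.single_eq_of_ne (by decide), Pi.single_eq_of_ne (by decide),
      if_pos (by norm_num)]
    simp
  · by_cases h2 : (a,b) = ((2:ℕ),(3:ℕ))
    · injection h2 with ha hb; subst ha; subst hb
      rw [Pi.single_eq_same, Pi.single_eq_of_ne (by decide), Pi.single_eq_of_ne (by decide),
        if_pos (by norm_num)]
      simp
    · by_cases h3 : (a,b) = ((1:ℕ),(3:ℕ))
      · injection h3 with ha hb; subst ha; subst hb
        rw [Pi.single_eq_same, Pi.single_eq_of_ne (by decide), Pi.single_eq_of_ne (by decide),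
          if_pos (by norm_num)]
        simp
      · rw [Pi.single_eq_of_ne h1, Pi.single_eq_of_ne h2, Pi.single_eq_of_ne h3, if_neg]
        · simp
        · rintro ⟨ha1, ha2, hb1, hb2⟩
          have : b = 3 := le_antisymm hb2 hb1
          subst this
          interval_cases a <;> simp_all

end Helpers

/-- For morphisms `Θ : M → N` and `Ψ : N → P` between direct sums of
interval representations of the `A₃(bf)` quiver, the block of the composition `Ψ ∘ Θ`
restricted to the `I[1,3]`-isotypic summands equals the composition of the restricted
blocks: `π_P ∘ (Ψ∘Θ) ∘ ι_M = (π_P ∘ Ψ ∘ ι_N) ∘ (π_N ∘ Θ ∘ ι_M)` (at each vertex `v`). -/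
theorem blk13_comp (K : Type) [Field K] (m₁ m₂ m₃ : ℕ × ℕ → ℕ)
    (Θ : RepMor K 3 tauBF m₁ m₂) (Ψ : RepMor K 3 tauBF m₂ m₃)
    (v : ℕ) (hv1 : 1 ≤ v) (hv3 : v ≤ 3) :
    LinearMap.proj (1, 3) ∘ₗ (Ψ.θ v ∘ₗ Θ.θ v) ∘ₗ
        LinearMap.single K (fun p => Fin (m₁ p) → K) (1, 3) =
      blk Ψ (1, 3) v ∘ₗ blk Θ (1, 3) v := by
  apply LinearMap.ext
  intro x
  simp only [LinearMap.comp_apply, blk]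
  show (Ψ.θ v) ((Θ.θ v) (Pi.single (1,3) x)) (1,3)
      = (Ψ.θ v) (Pi.single (1,3) ((Θ.θ v) (Pi.single (1,3) x) (1,3))) (1,3)
  conv_lhs => rw [← Ψ.supp v]
  simp only [LinearMap.comp_apply]
  rw [trunc_apply, if_pos ⟨le_refl 1, hv1, hv3, le_refl 3⟩]
  interval_cases v
  · rw [trunc1_decomp, map_add, map_add]
    simp only [Pi.add_apply]
    rw [theta11 Θ x, psi12_1 Ψ]
    simp
  · rw [trunc2_decomp, map_add, map_add, map_add]
    simp only [Pi.add_apply]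
    rw [psi12_2 Ψ, psi22_2 Ψ, psi23_2 Ψ]
    simp
  · rw [trunc3_decomp, map_add, map_add]
    simp only [Pi.add_apply]
    rw [theta33 Θ x, psi23_3 Ψ]
    simp
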